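/- arXiv:2201.10330 — 3 statements merged into one kernel-verified Lean document; each statement's English description precedes it below -/
import Mathlib

section
/- Let f be a symmetric bilinear form on a finite-dimensional real vector space V with radical A, and let K be a subspace of V. If H is a hyperplane of V containing the polar K^⊥, then there exists a vector x ∈ K \ A such that H^⊥ = A + span{x}, and consequently the polar of span{x} equals H. -/
open LinearMap (BilinForm)
open Submodule Module

private lemma rad_le_orthogonal {V : Type*} [AddCommGroup V] [Module ℝ V]
    (B : BilinForm ℝ V) (hsymm : B.IsSymm) (W : Submodule ℝ V) :
    B.orthogonal ⊤ ≤ B.orthogonal W := by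
  intro v hv w _
  exact hv w Submodule.mem_top

/-- If `H` is a hyperplane of `V` containing the polar `K^⊥` of a subspace `K` (with
respect to a nonzero symmetric bilinear form `B` with radical `A`), then there exists
`x ∈ K \ A` with `H^⊥ = A ⊔ span {x}`, and consequently `(span {x})^⊥ = H`. -/
theorem stmt1 {V : Type*} [AddCommGroup V] [Module ℝ V] [FiniteDimensional ℝ V]
    (B : BilinForm ℝ V) (hB : B ≠ 0) (hsymm : B.IsSymm)
    (A : Submodule ℝ V) (hA : A = B.orthogonal ⊤)
    (K : Submodule ℝ V)
    (H : Submodule ℝ V) (hH : finrank ℝ H + 1 = finrank ℝ V)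
    (hKH : B.orthogonal K ≤ H) :
    ∃ x : V, x ∈ K ∧ x ∉ A ∧
      B.orthogonal H = A ⊔ (Submodule.span ℝ {x}) ∧
      B.orthogonal (Submodule.span ℝ {x}) = H := by
  subst hA
  set A := B.orthogonal ⊤ with hA
  have hrefl : B.IsRefl := hsymm.isRefl
  have hAW : ∀ W : Submodule ℝ V, A ≤ B.orthogonal W :=
    fun W => rad_le_orthogonal B hsymm W
  have hAK : A ≤ B.orthogonal K := hAW K
  have hAH : A ≤ H := le_trans hAK hKH
  have hAHperp : A ≤ B.orthogonal H := hAW H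
  -- dimension of H^⊥
  have hdimH : finrank ℝ H + finrank ℝ (B.orthogonal H) =
      finrank ℝ V + finrank ℝ (H ⊓ A : Submodule ℝ V) :=
    LinearMap.BilinForm.finrank_add_finrank_orthogonal hrefl H
  have hHA : H ⊓ A = A := inf_eq_right.mpr hAH
  rw [hHA] at hdimH
  have hdimHperp : finrank ℝ (B.orthogonal H) = finrank ℝ A + 1 := by omega
  -- pick y ∈ H^⊥ \ A
  have hlt : A < B.orthogonal H := by
    refine lt_of_le_of_ne hAHperp fun h => ?_
    rw [← h] at hdimHperp
    omega
  obtain ⟨y, hyH, hyA⟩ := SetLike.exists_of_lt hlt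
  -- (K^⊥)^⊥ = K ⊔ A
  have hAKperp : A ≤ B.orthogonal K := hAK
  have hdK : finrank ℝ K + finrank ℝ (B.orthogonal K) =
      finrank ℝ V + finrank ℝ (K ⊓ A : Submodule ℝ V) :=
    LinearMap.BilinForm.finrank_add_finrank_orthogonal hrefl K
  have hdKK : finrank ℝ (B.orthogonal K) + finrank ℝ (B.orthogonal (B.orthogonal K)) =
      finrank ℝ V + finrank ℝ ((B.orthogonal K) ⊓ A : Submodule ℝ V) :=
    LinearMap.BilinForm.finrank_add_finrank_orthogonal hrefl (B.orthogonal K)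
  rw [inf_eq_right.mpr hAKperp] at hdKK
  have hsupinf : finrank ℝ (K ⊔ A : Submodule ℝ V) + finrank ℝ (K ⊓ A : Submodule ℝ V) =
      finrank ℝ K + finrank ℝ A := Submodule.finrank_sup_add_finrank_inf_eq K A
  have hle1 : K ⊔ A ≤ B.orthogonal (B.orthogonal K) :=
    sup_le (LinearMap.BilinForm.le_orthogonal_orthogonal hrefl) (hAW _)
  have hKperpperp : B.orthogonal (B.orthogonal K) = K ⊔ A := by
    refine (Submodule.eq_of_le_of_finrank_le hle1 ?_).symm
    omega
  -- y ∈ K ⊔ A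
  have hyKA : y ∈ K ⊔ A := by
    rw [← hKperpperp]
    exact (LinearMap.BilinForm.orthogonal_le hKH) hyH
  obtain ⟨k, hk, a, ha, rfl⟩ := Submodule.mem_sup.mp hyKA
  have hxH : k ∈ B.orthogonal H := by
    have : (k + a) - a ∈ B.orthogonal H := Submodule.sub_mem _ hyH (hAHperp ha)
    simpa using this
  have hxA : k ∉ A := fun h => hyA (Submodule.add_mem _ h ha)
  refine ⟨k, hk, hxA, ?_, ?_⟩
  · -- H^⊥ = A ⊔ span {k}
    have hxne : k ≠ 0 := fun h => hxA (h ▸ Submodule.zero_mem A)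
    have hspan : finrank ℝ (Submodule.span ℝ {k}) = 1 := finrank_span_singleton hxne
    have hinf : A ⊓ Submodule.span ℝ {k} = ⊥ := by
      rw [Submodule.eq_bot_iff]
      rintro v ⟨hvA, hvs⟩
      obtain ⟨c, rfl⟩ := Submodule.mem_span_singleton.mp hvs
      by_contra hne
      have hc : c ≠ 0 := fun h => hne (by simp [h])
      exact hxA (by simpa [smul_smul, inv_mul_cancel₀ hc] using Submodule.smul_mem A c⁻¹ hvA)
    have hsup2 : finrank ℝ (A ⊔ Submodule.span ℝ {k} : Submodule ℝ V) +
        finrank ℝ (A ⊓ Submodule.span ℝ {k} : Submodule ℝ V) =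
        finrank ℝ A + finrank ℝ (Submodule.span ℝ {k}) :=
      Submodule.finrank_sup_add_finrank_inf_eq A (Submodule.span ℝ {k})
    rw [hinf, finrank_bot] at hsup2
    have hle2 : A ⊔ Submodule.span ℝ {k} ≤ B.orthogonal H :=
      sup_le hAHperp ((Submodule.span_singleton_le_iff_mem k _).mpr hxH)
    exact (Submodule.eq_of_le_of_finrank_le hle2 (by omega)).symm
  · -- (span {k})^⊥ = H
    have hxne : k ≠ 0 := fun h => hxA (h ▸ Submodule.zero_mem A)
    have hspan : finrank ℝ (Submodule.span ℝ {k}) = 1 := finrank_span_singleton hxne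
    have hinfA : Submodule.span ℝ {k} ⊓ A = ⊥ := by
      rw [Submodule.eq_bot_iff]
      rintro v ⟨hvs, hvA⟩
      obtain ⟨c, rfl⟩ := Submodule.mem_span_singleton.mp hvs
      by_contra hne
      have hc : c ≠ 0 := fun h => hne (by simp [h])
      exact hxA (by simpa [smul_smul, inv_mul_cancel₀ hc] using Submodule.smul_mem A c⁻¹ hvA)
    have hd : finrank ℝ (Submodule.span ℝ {k}) +
        finrank ℝ (B.orthogonal (Submodule.span ℝ {k})) =
        finrank ℝ V + finrank ℝ (Submodule.span ℝ {k} ⊓ A : Submodule ℝ V) :=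
      LinearMap.BilinForm.finrank_add_finrank_orthogonal hrefl _
    rw [hinfA, finrank_bot] at hd
    have hle3 : H ≤ B.orthogonal (Submodule.span ℝ {k}) := by
      intro h hh n hn
      obtain ⟨c, rfl⟩ := Submodule.mem_span_singleton.mp hn
      have : B h k = 0 := hxH h hh
      have hbk : B k h = 0 := hrefl h k this
      simp [LinearMap.BilinForm.IsOrtho, hbk]
    exact (Submodule.eq_of_le_of_finrank_le hle3 (by omega)).symm
end

section
/- Let f be a symmetric bilinear form on a finite-dimensional real vector space V with radical A, and let K be a subspace. Suppose H₁,…,H_m are hyperplanes of V containing K^⊥ whose corresponding linear functionals are linearly independent, and suppose H_i^⊥ = A + span{x_i} with x_i ∈ K \ A for each i. Then for any linearly independent subset {y₁,…,y_r} of A, the set {x₁,…,x_m, y₁,…,y_r} is linearly independent. -/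
open LinearMap (BilinForm)
open Submodule Module

/-- Let `H i = ker (φ i)` (for `i : Fin m`) be hyperplanes containing `K^⊥`, with
linearly independent defining functionals `φ i`, and suppose the polar of each `H i`
is `A ⊔ span {x i}` with `x i ∈ K \ A`.  Then for any linearly independent family
`y : Fin r → V` of vectors of the radical `A`, the combined family
`x₁,…,x_m, y₁,…,y_r` is linearly independent. -/
theorem stmt2 {V : Type*} [AddCommGroup V] [Module ℝ V] [FiniteDimensional ℝ V]
    (B : BilinForm ℝ V) (hB : B ≠ 0) (hsymm : B.IsSymm)
    (A : Submodule ℝ V) (hA : A = B.orthogonal ⊤)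
    (K : Submodule ℝ V) {m r : ℕ}
    (φ : Fin m → (V →ₗ[ℝ] ℝ)) (hφ : LinearIndependent ℝ φ)
    (H : Fin m → Submodule ℝ V) (hHdef : ∀ i, H i = LinearMap.ker (φ i))
    (hKH : ∀ i, B.orthogonal K ≤ H i)
    (x : Fin m → V) (hxK : ∀ i, x i ∈ K) (hxA : ∀ i, x i ∉ A)
    (hHp : ∀ i, B.orthogonal (H i) = A ⊔ Submodule.span ℝ {x i})
    (y : Fin r → V) (hyA : ∀ j, y j ∈ A) (hy : LinearIndependent ℝ y) :
    LinearIndependent ℝ (Sum.elim x y) := by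
  -- membership in the radical means B v = 0
  have hmemA : ∀ v : V, v ∈ A ↔ B v = 0 := by
    intro v
    rw [hA, LinearMap.BilinForm.mem_orthogonal_iff]
    constructor
    · intro h
      ext n
      have h1 := h n trivial
      have h2 : RingHom.id ℝ (B n v) = B v n := hsymm.eq n v
      simp only [RingHom.id_apply] at h2
      simp only [LinearMap.zero_apply]
      rw [← h2]
      exact h1
    · intro h n _
      rw [← hsymm.eq v n]
      simp [h]
  -- B (y j) = 0
  have hBy : ∀ j, B (y j) = 0 := fun j => (hmemA (y j)).mp (hyA j)
  -- B (x i) vanishes on ker (φ i)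
  have hker : ∀ i, ∀ v ∈ LinearMap.ker (φ i), B (x i) v = 0 := by
    intro i v hv
    have hxmem : x i ∈ B.orthogonal (H i) := by
      rw [hHp i]
      exact Submodule.mem_sup_right (Submodule.mem_span_singleton_self (x i))
    rw [LinearMap.BilinForm.mem_orthogonal_iff] at hxmem
    have := hxmem v (by rw [hHdef i]; exact hv)
    have h2 := hsymm.eq v (x i)
    simpa [this] using h2.symm
  -- get scalars c i ≠ 0 with B (x i) = c i • φ i
  have hfac : ∀ i, ∃ c : ℝ, c ≠ 0 ∧ B (x i) = c • φ i := by
    intro i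
    have hφne : φ i ≠ 0 := by
      intro h0
      exact hφ.ne_zero i h0
    obtain ⟨u, hu⟩ : ∃ u, φ i u ≠ 0 := by
      by_contra h
      push_neg at h
      exact hφne (LinearMap.ext fun v => by simp [h v])
    refine ⟨B (x i) u / φ i u, ?_, ?_⟩
    · intro hc
      apply hxA i
      rw [hmemA]
      ext v
      have hv : v - (φ i v / φ i u) • u ∈ LinearMap.ker (φ i) := by
        simp [LinearMap.mem_ker, div_mul_cancel₀ _ hu]
      have := hker i _ hv
      simp only [map_sub, map_smul, smul_eq_mul, sub_eq_zero] at this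
      have hBu : B (x i) u = 0 := by
        field_simp at hc
        simpa using hc
      simp [this, hBu]
    · ext v
      have hv : v - (φ i v / φ i u) • u ∈ LinearMap.ker (φ i) := by
        simp [LinearMap.mem_ker, div_mul_cancel₀ _ hu]
      have := hker i _ hv
      simp only [map_sub, map_smul, smul_eq_mul, sub_eq_zero] at this
      simp only [this, LinearMap.smul_apply, smul_eq_mul]
      ring
  choose c hc0 hcB using hfac
  rw [Fintype.linearIndependent_iff]
  intro g hg
  have hsplit : (∑ i, g (Sum.inl i) • x i) + (∑ j, g (Sum.inr j) • y j) = 0 := by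
    rw [Fintype.sum_sum_type] at hg
    simpa using hg
  -- apply B
  have hBsum : ∑ i, (g (Sum.inl i) * c i) • φ i = 0 := by
    have := congrArg (⇑B) hsplit
    simp only [map_add, map_sum, map_smul, map_zero] at this
    have h2 : (∑ i, g (Sum.inl i) • B (x i)) = 0 := by
      rw [← this]
      simp [hBy]
    calc ∑ i, (g (Sum.inl i) * c i) • φ i
        = ∑ i, g (Sum.inl i) • B (x i) := by
          refine Finset.sum_congr rfl fun i _ => ?_
          rw [hcB i, smul_smul]
      _ = 0 := h2
  have hxzero : ∀ i, g (Sum.inl i) = 0 := by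
    intro i
    have := Fintype.linearIndependent_iff.mp hφ (fun i => g (Sum.inl i) * c i) hBsum i
    exact (mul_eq_zero.mp this).resolve_right (hc0 i)
  have hyzero : ∀ j, g (Sum.inr j) = 0 := by
    have hsum2 : (∑ j, g (Sum.inr j) • y j) = 0 := by
      rw [← hsplit]
      simp [hxzero]
    exact Fintype.linearIndependent_iff.mp hy _ hsum2
  rintro (i | j)
  · exact hxzero i
  · exact hyzero j
end

section
/- Every isometry of a nondegenerate symmetric bilinear form f on an (n+1)-dimensional real vector space V is a product of at most n+1 reflections in anisotropic vectors (Cartan–Dieudonné for real quadratic spaces): there exist anisotropic vectors w₁,…,w_m, m ≤ n+1, such that g = s_{w₁} ∘ ⋯ ∘ s_{w_m}. -/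
open LinearMap (BilinForm)
open Module

/-- The reflection in the hyperplane orthogonal to an anisotropic vector `w`. -/
noncomputable def reflVec {V : Type*} [AddCommGroup V] [Module ℝ V]
    (B : LinearMap.BilinForm ℝ V) (w : V) : V → V :=
  fun v => v - (2 * B v w / B w w) • w

namespace CD

open Polynomial

universe u

variable {V : Type u} [AddCommGroup V] [Module ℝ V]

/-- The reflection in `w` as a linear map. -/
noncomputable def rmap (B : BilinForm ℝ V) (w : V) : V →ₗ[ℝ] V :=
  LinearMap.id - (2 / B w w) • ((LinearMap.toSpanSingleton ℝ V w).comp (B.flip w))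

lemma rmap_apply (B : BilinForm ℝ V) (w v : V) :
    rmap B w v = v - (2 * B v w / B w w) • w := by
  simp [rmap, LinearMap.sub_apply, LinearMap.smul_apply, LinearMap.toSpanSingleton_apply,
    LinearMap.flip_apply, smul_smul, div_mul_eq_mul_div]

lemma coe_rmap (B : BilinForm ℝ V) (w : V) : ⇑(rmap B w) = reflVec B w :=
  funext fun v => rmap_apply B w v

lemma rmap_fixes (B : BilinForm ℝ V) {w v : V} (h : B v w = 0) : rmap B w v = v := by
  simp [rmap_apply, h]

lemma rmap_self (B : BilinForm ℝ V) {w : V} (h : B w w ≠ 0) : rmap B w w = -w := by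
  rw [rmap_apply, mul_div_assoc, div_self h]
  module

lemma rmap_isometry (B : BilinForm ℝ V) (hsymm : B.IsSymm) {w : V} (h : B w w ≠ 0)
    (x y : V) : B (rmap B w x) (rmap B w y) = B x y := by
  have hxw : B w x = B x w := (hsymm.eq x w).symm ▸ rfl
  have hyw : B w y = B y w := by have := hsymm.eq w y; simpa using this
  simp only [rmap_apply, map_sub, map_smul, LinearMap.sub_apply, LinearMap.smul_apply,
    smul_eq_mul]
  field_simp
  ring_nf
  linear_combination (-2 * B x w) * hyw

lemma rmap_sq (B : BilinForm ℝ V) {w : V} (h : B w w ≠ 0) (v : V) :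
    rmap B w (rmap B w v) = v := by
  simp only [rmap_apply, map_sub, map_smul, LinearMap.sub_apply, LinearMap.smul_apply,
    smul_eq_mul]
  rw [smul_sub, smul_smul, mul_div_assoc 2 ((B w) w) ((B w) w), div_self h, mul_one]
  module

lemma rmap_mul_rmap (B : BilinForm ℝ V) {w : V} (h : B w w ≠ 0) :
    rmap B w * rmap B w = 1 := by
  ext v; exact rmap_sq B h v

lemma reflect_swap (B : BilinForm ℝ V) (hsymm : B.IsSymm) {a v : V}
    (hQ : B a a = B v v) (hww : B (a - v) (a - v) ≠ 0) :
    rmap B (a - v) a = v := by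
  have h1 : B v a = B a v := by have := hsymm.eq v a; simpa using this
  have h2 : 2 * B a (a - v) = B (a - v) (a - v) := by
    simp only [map_sub, LinearMap.sub_apply]
    linear_combination hQ + h1
  rw [rmap_apply, h2, div_self hww, one_smul]
  abel

lemma det_prodMap {M N : Type*} [AddCommGroup M] [Module ℝ M] [FiniteDimensional ℝ M]
    [AddCommGroup N] [Module ℝ N] [FiniteDimensional ℝ N]
    (f : M →ₗ[ℝ] M) (g : N →ₗ[ℝ] N) :
    LinearMap.det (f.prodMap g) = LinearMap.det f * LinearMap.det g := by
  classical
  let b₁ := Module.finBasis ℝ M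
  let b₂ := Module.finBasis ℝ N
  rw [← LinearMap.det_toMatrix (b₁.prod b₂), LinearMap.toMatrix_prodMap b₁ b₂ f g,
    Matrix.det_fromBlocks_zero₂₁, LinearMap.det_toMatrix, LinearMap.det_toMatrix]

lemma det_unipotent [FiniteDimensional ℝ V] (N : V →ₗ[ℝ] V) (h : N ∘ₗ N = 0) :
    LinearMap.det (LinearMap.id + N) = 1 := by
  classical
  set d := finrank ℝ V with hd
  let b := Module.finBasis ℝ V
  set A := LinearMap.toMatrix b b N with hA
  have hnil : IsNilpotent (N : Module.End ℝ V) := ⟨2, by rw [pow_two]; exact h⟩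
  have hch : A.charpoly = X ^ d := by
    rw [LinearMap.charpoly_toMatrix N b]
    exact hnil.charpoly_eq_X_pow_finrank
  have heval : Polynomial.eval (-1 : ℝ) A.charpoly = (-1 : ℝ) ^ d * Matrix.det (1 + A) := by
    rw [Matrix.charpoly, _root_.eval_det, Matrix.matPolyEquiv_charmatrix, eval_sub, eval_X,
      eval_C]
    have hs : (Matrix.scalar (Fin d)) (-1 : ℝ) - A = -(1 + A) := by
      rw [Matrix.scalar_apply, ← Matrix.diagonal_one]
      ext i j
      by_cases hij : i = j <;> simp [hij, Matrix.diagonal] <;> ring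
    rw [hs, Matrix.det_neg]
    simp [hd]
  rw [hch] at heval
  simp only [eval_pow, eval_neg, eval_one, eval_X] at heval
  have hdet : Matrix.det (1 + A) = 1 := by
    have hne : ((-1 : ℝ)) ^ d ≠ 0 := by
      apply pow_ne_zero; norm_num
    field_simp at heval
    nlinarith [heval]
  calc LinearMap.det (LinearMap.id + N)
      = Matrix.det (LinearMap.toMatrix b b (LinearMap.id + N)) :=
        (LinearMap.det_toMatrix b _).symm
    _ = Matrix.det (1 + A) := by rw [map_add, LinearMap.toMatrix_id]
    _ = 1 := hdet

lemma det_rmap [FiniteDimensional ℝ V] (B : BilinForm ℝ V) (hsymm : B.IsSymm)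
    {w : V} (hw : B w w ≠ 0) : LinearMap.det (rmap B w) = -1 := by
  classical
  set p : Submodule ℝ V := ℝ ∙ w with hp
  set q : Submodule ℝ V := B.orthogonal (ℝ ∙ w) with hq
  have hcompl : IsCompl p q :=
    LinearMap.BilinForm.isCompl_span_singleton_orthogonal (by simpa using hw)
  let e := Submodule.prodEquivOfIsCompl p q hcompl
  let f : (p × q) →ₗ[ℝ] (p × q) := (-LinearMap.id : p →ₗ[ℝ] p).prodMap (LinearMap.id : q →ₗ[ℝ] q)
  have hwne : w ≠ 0 := fun hw0 => hw (by simp [hw0])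
  have key : rmap B w = (e : p × q →ₗ[ℝ] V) ∘ₗ f ∘ₗ (e.symm : V →ₗ[ℝ] p × q) := by
    have h1 : (rmap B w) ∘ₗ (e : p × q →ₗ[ℝ] V) = (e : p × q →ₗ[ℝ] V) ∘ₗ f := by
      apply LinearMap.ext
      rintro ⟨x, y⟩
      obtain ⟨c, hc⟩ := Submodule.mem_span_singleton.mp x.2
      have hyw : B (y : V) w = 0 := by
        have := hsymm.eq w (y : V)
        have h0 : B w (y : V) = 0 := y.2 w (Submodule.mem_span_singleton_self w)
        simpa [h0] using this.symm
      have he : e (x, y) = (x : V) + (y : V) := by simp [e, Submodule.coe_prodEquivOfIsCompl']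
      have he2 : e (f (x, y)) = -(x : V) + (y : V) := by
        have hf : f (x, y) = (-x, y) := rfl
        rw [hf]
        simp [e, Submodule.coe_prodEquivOfIsCompl']
      simp only [LinearMap.comp_apply, LinearEquiv.coe_coe, he, he2]
      rw [map_add, rmap_fixes B hyw, ← hc, map_smul, rmap_self B hw]
      simp
    calc rmap B w = ((rmap B w) ∘ₗ (e : p × q →ₗ[ℝ] V)) ∘ₗ (e.symm : V →ₗ[ℝ] p × q) := by
          ext v; simp
      _ = (e : p × q →ₗ[ℝ] V) ∘ₗ f ∘ₗ (e.symm : V →ₗ[ℝ] p × q) := by rw [h1, LinearMap.comp_assoc]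
  rw [key, LinearMap.det_conj f e, det_prodMap]
  have : (-LinearMap.id : p →ₗ[ℝ] p) = (-1 : ℝ) • LinearMap.id := by ext; simp
  rw [this, LinearMap.det_smul, finrank_span_singleton hwne]
  simp

lemma det_prod_list [FiniteDimensional ℝ V] (B : BilinForm ℝ V) (hsymm : B.IsSymm)
    (ws : List V) (h : ∀ w ∈ ws, B w w ≠ 0) :
    LinearMap.det ((ws.map (rmap B)).prod) = (-1 : ℝ) ^ ws.length := by
  induction ws with
  | nil => simp
  | cons a t ih =>
    simp only [List.map_cons, List.prod_cons, map_mul, List.length_cons]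
    rw [det_rmap B hsymm (h a List.mem_cons_self),
      ih (fun w hw => h w (List.mem_cons_of_mem a hw)), pow_succ]
    ring

lemma caseC [FiniteDimensional ℝ V] (B : BilinForm ℝ V) (hsymm : B.IsSymm)
    (hnd : B.Nondegenerate) (g : V →ₗ[ℝ] V) (hg : ∀ x y, B (g x) (g y) = B x y)
    (h1 : ∀ v, B v v ≠ 0 → g v ≠ v) (h2 : ∀ v, B v v ≠ 0 → B (g v - v) (g v - v) = 0) :
    LinearMap.det g = 1 ∧ Even (finrank ℝ V) := by
  have hrefl : B.IsRefl := hsymm.isRefl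
  have hsymm' : ∀ x y : V, B x y = B y x := fun x y => by have := hsymm.eq x y; simpa using this
  by_cases hex : ∃ u, B u u ≠ 0
  swap
  · push_neg at hex
    have hB0 : ∀ x y : V, B x y = 0 := by
      intro x y
      have h3 := hex (x + y)
      have h4 := hex x
      have h5 := hex y
      simp only [map_add, LinearMap.add_apply] at h3
      have := hsymm' x y
      linarith
    have hzero : ∀ x : V, x = 0 := fun x => hnd.1 x (fun y => hB0 x y)
    have hsub : Subsingleton V := ⟨fun a b => by rw [hzero a, hzero b]⟩
    constructor
    · have : g = LinearMap.id := by ext x; rw [hzero (g x), hzero (LinearMap.id x)]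
      rw [this]; exact LinearMap.det_id
    · have : finrank ℝ V = 0 := finrank_zero_of_subsingleton
      rw [this]; exact Even.zero
  obtain ⟨u, hu⟩ := hex
  set N : V →ₗ[ℝ] V := g - LinearMap.id with hN
  have hNapp : ∀ x, N x = g x - x := fun x => by simp [hN]
  -- Step 1 : the image of N is totally isotropic
  have step1 : ∀ x, B (N x) (N x) = 0 := by
    intro x
    by_cases hx : B x x ≠ 0
    · have := h2 x hx; rw [hNapp]; exact this
    push_neg at hx
    set M : ℝ := max (-2 * B x u / B u u) 0 with hM
    have key : ∀ t : ℝ, M < t →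
        B (N x) (N x) + 2 * t * B (N x) (N u) + t ^ 2 * B (N u) (N u) = 0 := by
      intro t ht
      have ht0 : t ≠ 0 := by
        have : (0 : ℝ) < t := lt_of_le_of_lt (le_max_right _ _) ht
        linarith
      have htr : 2 * B x u + t * B u u ≠ 0 := by
        intro habs
        have hformula : t = -2 * B x u / B u u := by field_simp; linarith
        have : -2 * B x u / B u u ≤ M := le_max_left _ _
        rw [← hformula] at this
        linarith
      have hQ : B (x + t • u) (x + t • u) ≠ 0 := by
        have hexp : B (x + t • u) (x + t • u) = t * (2 * B x u + t * B u u) := by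
          simp only [map_add, map_smul, LinearMap.add_apply, LinearMap.smul_apply, smul_eq_mul]
          have := hsymm' u x
          linear_combination hx + t * this
        rw [hexp]
        exact mul_ne_zero ht0 htr
      have h0 := h2 _ hQ
      have hNsum : g (x + t • u) - (x + t • u) = N x + t • N u := by
        rw [hNapp, hNapp]
        simp only [map_add, map_smul]
        module
      rw [hNsum] at h0
      simp only [map_add, map_smul, LinearMap.add_apply, LinearMap.smul_apply, smul_eq_mul] at h0
      have := hsymm' (N u) (N x)
      linear_combination h0 - t * this
    have hA := key (M + 1) (by linarith)
    have hB := key (M + 2) (by linarith)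
    have hC := key (M + 3) (by linarith)
    linear_combination (((M + 2) * (M + 3)) / 2) * hA - ((M + 1) * (M + 3)) * hB +
      (((M + 1) * (M + 2)) / 2) * hC
  have step2 : ∀ x y, B (N x) (N y) = 0 := by
    intro x y
    have h3 := step1 (x + y)
    have h4 := step1 x
    have h5 := step1 y
    rw [map_add] at h3
    simp only [map_add, LinearMap.add_apply] at h3
    have := hsymm' (N x) (N y)
    linarith
  have hker_gfix : ∀ x, x ∈ LinearMap.ker N ↔ g x = x := by
    intro x
    rw [LinearMap.mem_ker, hNapp, sub_eq_zero]
  have step3 : LinearMap.ker N ≤ B.orthogonal (LinearMap.range N) := by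
    intro f hf n hn
    obtain ⟨x, rfl⟩ := hn
    show B (N x) f = 0
    have hgf : g f = f := (hker_gfix f).mp hf
    rw [hNapp]
    simp only [map_sub, LinearMap.sub_apply]
    calc B (g x) f - B x f = B (g x) (g f) - B x f := by rw [hgf]
      _ = 0 := by rw [hg x f]; ring
  have hrange_le : LinearMap.range N ≤ B.orthogonal (LinearMap.range N) := by
    rintro y ⟨x, rfl⟩ n hn
    obtain ⟨z, rfl⟩ := hn
    exact step2 z x
  have hdim : finrank ℝ (LinearMap.range N) + finrank ℝ (LinearMap.ker N) = finrank ℝ V :=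
    LinearMap.finrank_range_add_finrank_ker N
  have horth : finrank ℝ (B.orthogonal (LinearMap.range N)) =
      finrank ℝ V - finrank ℝ (LinearMap.range N) :=
    LinearMap.BilinForm.finrank_orthogonal hnd _
  have hker_eq : LinearMap.ker N = B.orthogonal (LinearMap.range N) := by
    apply Submodule.eq_of_le_of_finrank_le step3
    have hle : finrank ℝ (LinearMap.range N) ≤ finrank ℝ V := Submodule.finrank_le _
    omega
  have hrange_ker : LinearMap.range N ≤ LinearMap.ker N := by
    rw [hker_eq]; exact hrange_le
  have hNN : N ∘ₗ N = 0 := by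
    ext x
    have : N x ∈ LinearMap.ker N := hrange_ker ⟨x, rfl⟩
    simpa using this
  constructor
  · have hg_eq : g = LinearMap.id + N := by rw [hN]; abel
    rw [hg_eq]
    exact det_unipotent N hNN
  · have hFiso : ∀ x ∈ LinearMap.ker N, B x x = 0 := by
      intro x hx
      by_contra hxx
      exact h1 x hxx ((hker_gfix x).mp hx)
    have hker_le : LinearMap.ker N ≤ B.orthogonal (LinearMap.ker N) := by
      intro y hy x hx
      show B x y = 0
      have h3 := hFiso _ (Submodule.add_mem _ hx hy)
      have h4 := hFiso _ hx
      have h5 := hFiso _ hy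
      simp only [map_add, LinearMap.add_apply] at h3
      have := hsymm' x y
      linarith
    have horth_ker : B.orthogonal (LinearMap.ker N) = LinearMap.range N := by
      rw [hker_eq, LinearMap.BilinForm.orthogonal_orthogonal hnd hrefl]
    rw [horth_ker] at hker_le
    have heq : LinearMap.range N = LinearMap.ker N := le_antisymm hrange_ker hker_le
    rw [heq] at hdim
    exact ⟨finrank ℝ (LinearMap.ker N), by omega⟩

/-- The statement of Cartan–Dieudonné for dimension `d`. -/
def Stmt (d : ℕ) : Prop :=
  ∀ (V : Type u) [AddCommGroup V] [Module ℝ V] [FiniteDimensional ℝ V],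
    finrank ℝ V = d → ∀ B : BilinForm ℝ V, B.IsSymm → B.Nondegenerate →
    ∀ g : V →ₗ[ℝ] V, (∀ x y, B (g x) (g y) = B x y) →
    ∃ ws : List V, ws.length ≤ d ∧ (∀ w ∈ ws, B w w ≠ 0) ∧ g = (ws.map (rmap B)).prod

lemma fixed_case [FiniteDimensional ℝ V]
    (B : BilinForm ℝ V) (hsymm : B.IsSymm) (hnd : B.Nondegenerate)
    (IH : ∀ m, m < finrank ℝ V → Stmt.{u} m)
    (g : V →ₗ[ℝ] V) (hg : ∀ x y, B (g x) (g y) = B x y)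
    {v : V} (hv : B v v ≠ 0) (hgv : g v = v) :
    ∃ ws : List V, ws.length + 1 ≤ finrank ℝ V ∧ (∀ w ∈ ws, B w w ≠ 0) ∧
      g = (ws.map (rmap B)).prod := by
  classical
  have hrefl : B.IsRefl := hsymm.isRefl
  set W : Submodule ℝ V := B.orthogonal (ℝ ∙ v) with hW
  have hcompl : IsCompl (ℝ ∙ v) W :=
    LinearMap.BilinForm.isCompl_span_singleton_orthogonal (by simpa using hv)
  have hvne : v ≠ 0 := fun h => hv (by simp [h])
  have hrank1 : finrank ℝ (ℝ ∙ v : Submodule ℝ V) = 1 := finrank_span_singleton hvne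
  have hrankW : finrank ℝ W + 1 = finrank ℝ V := by
    rw [← Submodule.finrank_add_eq_of_isCompl hcompl, hrank1]
    omega
  have hBv : ∀ x : V, x ∈ W → B v x = 0 := fun x hx =>
    hx v (Submodule.mem_span_singleton_self v)
  have hBv' : ∀ x : V, x ∈ W → B x v = 0 := fun x hx => hrefl _ _ (hBv x hx)
  have hWmem : ∀ x : V, B v x = 0 → x ∈ W := by
    intro x hx n hn
    obtain ⟨c, rfl⟩ := Submodule.mem_span_singleton.mp hn
    show B (c • v) x = 0
    rw [map_smul]
    simp [hx]
  have hgW : ∀ x ∈ W, g x ∈ W := by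
    intro x hx
    apply hWmem
    have h3 : B (g v) (g x) = B v x := hg v x
    rw [hgv] at h3
    rw [h3]
    exact hBv x hx
  let g' : W →ₗ[ℝ] W := g.restrict hgW
  set B' : BilinForm ℝ W := B.restrict W with hB'
  have hB'app : ∀ x y : W, B' x y = B (x : V) (y : V) := fun x y => rfl
  have hsymm' : B'.IsSymm := ⟨fun x y => hsymm.eq (x : V) (y : V)⟩
  have hnd' : B'.Nondegenerate := by
    refine (hsymm'.isRefl.nondegenerate_iff_separatingLeft).2 ?_
    intro x hx
    have hall : ∀ y : V, B (x : V) y = 0 := by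
      intro y
      have hy : y ∈ (ℝ ∙ v) ⊔ W := by rw [hcompl.sup_eq_top]; trivial
      obtain ⟨y₁, hy₁, z, hz, rfl⟩ := Submodule.mem_sup.mp hy
      obtain ⟨c, rfl⟩ := Submodule.mem_span_singleton.mp hy₁
      rw [map_add, map_smul]
      have h5 := hx ⟨z, hz⟩
      rw [hB'app] at h5
      simp only [h5, hBv' (x : V) x.2, smul_eq_mul, mul_zero, add_zero]
    exact Subtype.ext (hnd.1 (x : V) hall)
  have hg'app : ∀ x : W, (g' x : V) = g (x : V) := fun x => rfl
  have hg' : ∀ x y : W, B' (g' x) (g' y) = B' x y := fun x y => hg (x : V) (y : V)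
  obtain ⟨ws', hlen, hani, hprod⟩ :=
    IH (finrank ℝ W) (by omega) W rfl B' hsymm' hnd' g' hg'
  have hbridge : ∀ (u : W) (x : W),
      rmap B (u : V) (x : V) = ((rmap B' u x : W) : V) := by
    intro u x
    rw [rmap_apply, rmap_apply]
    push_cast
    rfl
  have key1 : ∀ l : List W,
      ((l.map fun u : W => rmap B (u : V)).prod) v = v := by
    intro l
    induction l with
    | nil => simp
    | cons a t ih =>
      simp only [List.map_cons, List.prod_cons, Module.End.mul_apply]
      rw [ih]
      exact rmap_fixes B (hBv _ a.2)
  have key2 : ∀ (l : List W) (x : W),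
      ((l.map fun u : W => rmap B (u : V)).prod) (x : V) =
        (((l.map (rmap B')).prod x : W) : V) := by
    intro l x
    induction l with
    | nil => simp
    | cons a t ih =>
      simp only [List.map_cons, List.prod_cons, Module.End.mul_apply]
      rw [ih]
      exact hbridge a _
  refine ⟨ws'.map (Subtype.val), ?_, ?_, ?_⟩
  · simpa using by omega
  · intro w hw
    simp only [List.mem_map] at hw
    obtain ⟨w', hw', rfl⟩ := hw
    exact hani w' hw'
  · apply LinearMap.ext
    intro x
    have hx : x ∈ (ℝ ∙ v) ⊔ W := by rw [hcompl.sup_eq_top]; trivial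
    obtain ⟨y, hy, z, hz, rfl⟩ := Submodule.mem_sup.mp hx
    obtain ⟨c, rfl⟩ := Submodule.mem_span_singleton.mp hy
    have hmap : (ws'.map Subtype.val).map (rmap B) = ws'.map fun u : W => rmap B (u : V) := by
      rw [List.map_map]; rfl
    rw [map_add, map_smul, hgv, hmap, map_add, map_smul]
    rw [key1 ws', key2 ws' ⟨z, hz⟩, ← hprod]
    rw [hg'app ⟨z, hz⟩]

lemma main : ∀ d : ℕ, Stmt.{u} d := by
  intro d
  induction d using Nat.strong_induction_on with
  | _ d IH =>
  intro V _ _ _ hd B hsymm hnd g hg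
  subst hd
  have case_ab : ∀ h : V →ₗ[ℝ] V, (∀ x y, B (h x) (h y) = B x y) →
      ((∃ v, B v v ≠ 0 ∧ h v = v) ∨ (∃ v, B v v ≠ 0 ∧ B (h v - v) (h v - v) ≠ 0)) →
      ∃ ws : List V, ws.length ≤ finrank ℝ V ∧ (∀ w ∈ ws, B w w ≠ 0) ∧
        h = (ws.map (rmap B)).prod := by
    rintro h hiso (⟨v, hv, hfix⟩ | ⟨v, hv, hvw⟩)
    · obtain ⟨ws, hl, ha, hp⟩ := fixed_case B hsymm hnd IH h hiso hv hfix
      exact ⟨ws, by omega, ha, hp⟩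
    · set w := h v - v with hwdef
      have hQ : B (h v) (h v) = B v v := hiso v v
      have hswap : rmap B w (h v) = v := reflect_swap B hsymm hQ hvw
      set h2 : V →ₗ[ℝ] V := rmap B w * h with hh2
      have hiso2 : ∀ x y, B (h2 x) (h2 y) = B x y := by
        intro x y
        rw [hh2]
        simp only [Module.End.mul_apply]
        rw [rmap_isometry B hsymm hvw, hiso]
      have hfix2 : h2 v = v := by
        rw [hh2]; simp only [Module.End.mul_apply]; exact hswap
      obtain ⟨ws, hl, ha, hp⟩ := fixed_case B hsymm hnd IH h2 hiso2 hv hfix2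
      refine ⟨w :: ws, by simpa using hl, ?_, ?_⟩
      · intro x hx
        rcases List.mem_cons.mp hx with rfl | hx
        · exact hvw
        · exact ha x hx
      · have hinv : h = rmap B w * h2 := by
          rw [hh2, ← mul_assoc, rmap_mul_rmap B hvw, one_mul]
        rw [hinv, hp]
        simp [List.map_cons, List.prod_cons]
  by_cases hab : (∃ v, B v v ≠ 0 ∧ g v = v) ∨ (∃ v, B v v ≠ 0 ∧ B (g v - v) (g v - v) ≠ 0)
  · exact case_ab g hg hab
  · push_neg at hab
    obtain ⟨hab1, hab2⟩ := hab
    have h1 : ∀ v, B v v ≠ 0 → g v ≠ v := fun v hv => (hab1 v hv)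
    have h2 : ∀ v, B v v ≠ 0 → B (g v - v) (g v - v) = 0 := fun v hv => (hab2 v hv)
    obtain ⟨hdet, heven⟩ := caseC B hsymm hnd g hg h1 h2
    by_cases hex : ∃ u, B u u ≠ 0
    · obtain ⟨u, hu⟩ := hex
      set h : V →ₗ[ℝ] V := rmap B u * g with hh
      have hiso_h : ∀ x y, B (h x) (h y) = B x y := by
        intro x y
        rw [hh]
        simp only [Module.End.mul_apply]
        rw [rmap_isometry B hsymm hu, hg]
      have hdeth : LinearMap.det h = -1 := by
        rw [hh, map_mul, det_rmap B hsymm hu, hdet]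
        ring
      have habh : (∃ v, B v v ≠ 0 ∧ h v = v) ∨
          (∃ v, B v v ≠ 0 ∧ B (h v - v) (h v - v) ≠ 0) := by
        by_contra hC
        push_neg at hC
        obtain ⟨hdeth', _⟩ := caseC B hsymm hnd h hiso_h
          (fun v hv => (hC.1 v hv)) (fun v hv => (hC.2 v hv))
        rw [hdeth'] at hdeth
        norm_num at hdeth
      obtain ⟨ws, hl, ha, hp⟩ := case_ab h hiso_h habh
      have hpar : ((-1 : ℝ)) ^ ws.length = -1 := by
        rw [← det_prod_list B hsymm ws ha, ← hp, hdeth]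
      have hodd : ¬ Even ws.length := fun hev => by
        rw [hev.neg_one_pow] at hpar
        norm_num at hpar
      have hlt : ws.length + 1 ≤ finrank ℝ V := by
        have hne : ws.length ≠ finrank ℝ V := fun hEq => hodd (hEq ▸ heven)
        omega
      refine ⟨u :: ws, by simpa using hlt, ?_, ?_⟩
      · intro x hx
        rcases List.mem_cons.mp hx with rfl | hx
        · exact hu
        · exact ha x hx
      · have hinv : g = rmap B u * h := by
          rw [hh, ← mul_assoc, rmap_mul_rmap B hu, one_mul]
        rw [hinv, hp]
        simp [List.map_cons, List.prod_cons]
    · push_neg at hex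
      have hsymm' : ∀ x y : V, B x y = B y x := fun x y => by have := hsymm.eq x y; simpa using this
      have hB0 : ∀ x y : V, B x y = 0 := by
        intro x y
        have h3 := hex (x + y)
        have h4 := hex x
        have h5 := hex y
        simp only [map_add, LinearMap.add_apply] at h3
        have := hsymm' x y
        linarith
      have hzero : ∀ x : V, x = 0 := fun x => hnd.1 x (fun y => hB0 x y)
      refine ⟨[], by simp, by simp, ?_⟩
      apply LinearMap.ext
      intro x
      simp only [List.map_nil, List.prod_nil, Module.End.one_apply]
      rw [hzero (g x), hzero x]

end CD

/-- Cartan–Dieudonné: every isometry of a nondegenerate symmetric bilinear form on an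
`(n+1)`-dimensional real vector space is a product of at most `n+1` reflections in
anisotropic vectors. -/
theorem stmt12 {V : Type*} [AddCommGroup V] [Module ℝ V] [FiniteDimensional ℝ V]
    {n : ℕ} (hdim : finrank ℝ V = n + 1)
    (B : BilinForm ℝ V) (hsymm : B.IsSymm) (hnd : B.Nondegenerate)
    (g : V →ₗ[ℝ] V) (hg : ∀ v w, B (g v) (g w) = B v w) :
    ∃ ws : List V, ws.length ≤ n + 1 ∧ (∀ w ∈ ws, B w w ≠ 0) ∧
      ⇑g = (ws.map (reflVec B)).foldr (· ∘ ·) id := by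
  obtain ⟨ws, hl, ha, hp⟩ := CD.main (n + 1) V hdim B hsymm hnd g hg
  refine ⟨ws, hl, ha, ?_⟩
  rw [hp]
  clear hp hl ha
  induction ws with
  | nil =>
    funext x
    simp
  | cons a t ih =>
    simp only [List.map_cons, List.prod_cons, List.foldr_cons]
    funext x
    simp only [Module.End.mul_apply, Function.comp_apply]
    rw [← ih]
    rw [CD.coe_rmap]
end
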